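/- (Proposition 5, lower bound for the minimization case.) Let u₁, u₂ be real numbers with u₁ ≥ u₂ and set δ = u₁ − u₂. Let l_δ, u_δ, l_θ, u_θ, θ be real numbers with 0 ≤ l_δ ≤ δ ≤ u_δ and 0 < l_θ ≤ θ ≤ u_θ. Then u₁·Φ(l_δ/u_θ) + u₂·(1 − Φ(l_δ/u_θ)) + l_θ·φ(u_δ/l_θ) ≤ u₁·Φ(δ/θ) + u₂·Φ(−δ/θ) + θ·φ(δ/θ). -/
import Mathlib


open MeasureTheory ProbabilityTheory Real

/-- Standard normal p.d.f. -/
noncomputable def phi (w : ℝ) : ℝ := (1 / Real.sqrt (2 * Real.pi)) * Real.exp (-w ^ 2 / 2)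

/-- Standard normal c.d.f. -/
noncomputable def Phi (w : ℝ) : ℝ := ∫ u in Set.Iic w, phi u

lemma phi_nonneg (w : ℝ) : 0 ≤ phi w := by
  unfold phi
  positivity

lemma phi_integrable : Integrable phi := by
  have h : phi = fun x => (1 / Real.sqrt (2 * Real.pi)) * Real.exp (-(1/2) * x ^ 2) := by
    funext x; unfold phi; ring_nf
  rw [h]
  exact (integrable_exp_neg_mul_sq (by norm_num : (0:ℝ) < 1/2)).const_mul _

lemma integral_phi : ∫ u, phi u = 1 := by
  have h : ∀ x : ℝ, phi x = (1 / Real.sqrt (2 * Real.pi)) * Real.exp (-(1/2) * x ^ 2) := by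
    intro x; unfold phi; ring_nf
  simp_rw [h]
  rw [MeasureTheory.integral_const_mul, integral_gaussian]
  have : Real.sqrt (Real.pi / (1/2)) = Real.sqrt (2 * Real.pi) := by norm_num; ring_nf
  rw [this]
  have hpos : 0 < Real.sqrt (2 * Real.pi) := Real.sqrt_pos.mpr (by positivity)
  field_simp

lemma Phi_mono {a b : ℝ} (h : a ≤ b) : Phi a ≤ Phi b := by
  unfold Phi
  apply setIntegral_mono_set phi_integrable.integrableOn
    (Filter.Eventually.of_forall fun x => phi_nonneg x)
  exact HasSubset.Subset.eventuallyLE (Set.Iic_subset_Iic.mpr h)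

lemma Phi_neg (x : ℝ) : Phi (-x) = 1 - Phi x := by
  have heven : ∀ u : ℝ, phi (-u) = phi u := by
    intro u; unfold phi; ring_nf
  have h1 : Phi (-x) = ∫ u in Set.Ioi x, phi u := by
    unfold Phi
    rw [← integral_comp_neg_Ioi x phi]
    simp_rw [heven]
  have h2 : Phi x + ∫ u in Set.Ioi x, phi u = 1 := by
    unfold Phi
    rw [← integral_phi]
    exact intervalIntegral.integral_Iic_add_Ioi phi_integrable.integrableOn
      phi_integrable.integrableOn
  rw [h1]; linarith

lemma phi_anti {a b : ℝ} (ha : 0 ≤ a) (h : a ≤ b) : phi b ≤ phi a := by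
  unfold phi
  apply mul_le_mul_of_nonneg_left _ (by positivity)
  apply Real.exp_le_exp.mpr
  nlinarith

theorem enhanced_lower_bound
    (u₁ u₂ lδ uδ lθ uθ θ : ℝ) (h12 : u₂ ≤ u₁)
    (hlδ : 0 ≤ lδ) (hδl : lδ ≤ u₁ - u₂) (hδu : u₁ - u₂ ≤ uδ)
    (hlθ : 0 < lθ) (hθl : lθ ≤ θ) (hθu : θ ≤ uθ) :
    u₁ * Phi (lδ / uθ) + u₂ * (1 - Phi (lδ / uθ)) + lθ * phi (uδ / lθ)
      ≤ u₁ * Phi ((u₁ - u₂) / θ) + u₂ * Phi (-(u₁ - u₂) / θ) + θ * phi ((u₁ - u₂) / θ) := by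
  have hθ : 0 < θ := lt_of_lt_of_le hlθ hθl
  have huθ : 0 < uθ := lt_of_lt_of_le hθ hθu
  have hδ : 0 ≤ u₁ - u₂ := by linarith
  rw [show -(u₁ - u₂) / θ = -((u₁ - u₂) / θ) by ring, Phi_neg]
  -- Phi monotone part
  have h1 : Phi (lδ / uθ) ≤ Phi ((u₁ - u₂) / θ) := by
    apply Phi_mono
    exact div_le_div₀ hδ hδl hθ hθu
  -- phi part
  have hq : (u₁ - u₂) / θ ≤ uδ / lθ := div_le_div₀ (by linarith : (0:ℝ) ≤ uδ) hδu hlθ hθl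
  have hq0 : 0 ≤ (u₁ - u₂) / θ := div_nonneg hδ hθ.le
  have h2 : lθ * phi (uδ / lθ) ≤ θ * phi ((u₁ - u₂) / θ) :=
    mul_le_mul hθl (phi_anti hq0 hq) (phi_nonneg _) hθ.le
  nlinarith [phi_nonneg (uδ / lθ), mul_le_mul_of_nonneg_left h1 hδ]
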